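/- Let k be an algebraically closed field of characteristic zero and V a 5-dimensional k-vector space. If (L, P) and (L′, P′) are two Cremona–Richmond configurations in V, then they are projectively equivalent: there exists a linear automorphism g of V such that the set {g(L(ρ)) : ρ a fixed-point-free involution} equals {L′(ρ) : ρ a fixed-point-free involution} and the set {g(P(σ)) : σ a transposition} equals {P′(σ) : σ a transposition}. (Theorem A.4: a configuration of 15 lines with 15 intersection points in ℙ⁴ not contained in a ℙ³ and combinatorially isomorphic to the Cremona–Richmond configuration is unique up to projective transformation.) -/

import Mathlib

/-- A fixed-point-free involution of {1,…,6}: a permutation ρ with ρ² = id and no fixed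
points (i.e. a product of three disjoint transpositions, an element of cycle type [2,2,2]). -/
def IsFPFInvolution (ρ : Equiv.Perm (Fin 6)) : Prop :=
  ρ * ρ = 1 ∧ ∀ i, ρ i ≠ i

/-- A Cremona–Richmond configuration in a 5-dimensional k-vector space V: an injective
assignment of a 2-dimensional subspace L(ρ) to every fixed-point-free involution ρ and of a
1-dimensional subspace P(σ) to every transposition σ, such that (a) P(σ) ⊆ L(ρ) iff
σρ = ρσ; (b) lines indexed by distinct non-commuting involutions meet only in 0; and
(c) the lines together span V. -/
structure CremonaRichmondConfig (k V : Type*) [Field k] [AddCommGroup V] [Module k V] where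
  L : {ρ : Equiv.Perm (Fin 6) // IsFPFInvolution ρ} → Submodule k V
  P : {σ : Equiv.Perm (Fin 6) // σ.IsSwap} → Submodule k V
  L_injective : Function.Injective L
  P_injective : Function.Injective P
  finrank_L : ∀ ρ, Module.finrank k (L ρ) = 2
  finrank_P : ∀ σ, Module.finrank k (P σ) = 1
  incidence : ∀ σ ρ, P σ ≤ L ρ ↔ σ.1 * ρ.1 = ρ.1 * σ.1
  lines_meet_trivially :
    ∀ ρ₁ ρ₂, ρ₁ ≠ ρ₂ → ρ₁.1 * ρ₂.1 ≠ ρ₂.1 * ρ₁.1 → L ρ₁ ⊓ L ρ₂ = ⊥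
  lines_span : (⨆ ρ, L ρ) = ⊤


/-! ### Auxiliary material for the proof -/

instance : DecidablePred IsFPFInvolution := fun ρ => by unfold IsFPFInvolution; infer_instance

/-- The transpositions, as elements of the subtype. -/
def S (i j : Fin 6) (h : i ≠ j := by decide) : {σ : Equiv.Perm (Fin 6) // σ.IsSwap} :=
  ⟨Equiv.swap i j, i, j, h, rfl⟩

/-- Fixed-point-free involutions, as elements of the subtype. -/
def R (ρ : Equiv.Perm (Fin 6)) (h : IsFPFInvolution ρ := by decide) :
    {ρ : Equiv.Perm (Fin 6) // IsFPFInvolution ρ} := ⟨ρ, h⟩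

theorem swap_enum : ∀ σ : Equiv.Perm (Fin 6), σ.IsSwap → σ ∈ [
    Equiv.swap 0 1, Equiv.swap 0 2, Equiv.swap 0 3, Equiv.swap 0 4, Equiv.swap 0 5,
    Equiv.swap 1 2, Equiv.swap 1 3, Equiv.swap 1 4, Equiv.swap 1 5, Equiv.swap 2 3,
    Equiv.swap 2 4, Equiv.swap 2 5, Equiv.swap 3 4, Equiv.swap 3 5, Equiv.swap 4 5] := by
  rintro σ ⟨x, y, hxy, rfl⟩
  fin_cases x <;> fin_cases y <;> first | exact absurd rfl hxy | decide
set_option maxRecDepth 40000 in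
set_option maxHeartbeats 1000000 in
theorem fpf_enum : ∀ ρ : Equiv.Perm (Fin 6), IsFPFInvolution ρ → ρ ∈ [
    Equiv.swap 0 1 * Equiv.swap 2 3 * Equiv.swap 4 5,
    Equiv.swap 0 1 * Equiv.swap 2 4 * Equiv.swap 3 5,
    Equiv.swap 0 1 * Equiv.swap 2 5 * Equiv.swap 3 4,
    Equiv.swap 0 2 * Equiv.swap 1 3 * Equiv.swap 4 5,
    Equiv.swap 0 2 * Equiv.swap 1 4 * Equiv.swap 3 5,
    Equiv.swap 0 2 * Equiv.swap 1 5 * Equiv.swap 3 4,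
    Equiv.swap 0 3 * Equiv.swap 1 2 * Equiv.swap 4 5,
    Equiv.swap 0 3 * Equiv.swap 1 4 * Equiv.swap 2 5,
    Equiv.swap 0 3 * Equiv.swap 1 5 * Equiv.swap 2 4,
    Equiv.swap 0 4 * Equiv.swap 1 2 * Equiv.swap 3 5,
    Equiv.swap 0 4 * Equiv.swap 1 3 * Equiv.swap 2 5,
    Equiv.swap 0 4 * Equiv.swap 1 5 * Equiv.swap 2 3,
    Equiv.swap 0 5 * Equiv.swap 1 2 * Equiv.swap 3 4,
    Equiv.swap 0 5 * Equiv.swap 1 3 * Equiv.swap 2 4,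
    Equiv.swap 0 5 * Equiv.swap 1 4 * Equiv.swap 2 3] := by decide
/-- The canonical coordinates of the 15 points of a Cremona–Richmond configuration. -/
def crVec {V : Type*} [AddCommGroup V] (b : Fin 5 → V) (σ : Equiv.Perm (Fin 6)) : V :=
  if σ = Equiv.swap 0 1 then b 0
  else
  if σ = Equiv.swap 0 2 then b 2
  else
  if σ = Equiv.swap 0 3 then b 4
  else
  if σ = Equiv.swap 0 4 then b 2 + b 3 + b 4 - b 0 - b 1
  else
  if σ = Equiv.swap 0 5 then -b 3 - b 1
  else
  if σ = Equiv.swap 1 2 then b 4 - b 1 - b 0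
  else
  if σ = Equiv.swap 1 3 then b 2 - b 0 - b 1
  else
  if σ = Equiv.swap 1 4 then b 3
  else
  if σ = Equiv.swap 2 3 then b 1
  else
  if σ = Equiv.swap 2 4 then b 0 - b 2 - b 3
  else
  if σ = Equiv.swap 2 5 then -b 3 - b 4
  else
  if σ = Equiv.swap 3 4 then b 0 - b 3 - b 4
  else
  if σ = Equiv.swap 3 5 then -b 2 - b 3
  else
  if σ = Equiv.swap 4 5 then -b 1 - b 0
  else
  b 2 + b 3 + b 4 - b 0
theorem crVec_01 {V : Type*} [AddCommGroup V] (b : Fin 5 → V) :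
    crVec b (Equiv.swap 0 1) = b 0 := by rw [crVec]; rw [if_pos rfl]

theorem crVec_02 {V : Type*} [AddCommGroup V] (b : Fin 5 → V) :
    crVec b (Equiv.swap 0 2) = b 2 := by rw [crVec]; rw [if_neg (by decide)]; rw [if_pos rfl]

theorem crVec_03 {V : Type*} [AddCommGroup V] (b : Fin 5 → V) :
    crVec b (Equiv.swap 0 3) = b 4 := by rw [crVec]; rw [if_neg (by decide)]; rw [if_neg (by decide)]; rw [if_pos rfl]

theorem crVec_04 {V : Type*} [AddCommGroup V] (b : Fin 5 → V) :
    crVec b (Equiv.swap 0 4) = b 2 + b 3 + b 4 - b 0 - b 1 := by rw [crVec]; rw [if_neg (by decide)]; rw [if_neg (by decide)]; rw [if_neg (by decide)]; rw [if_pos rfl]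

theorem crVec_05 {V : Type*} [AddCommGroup V] (b : Fin 5 → V) :
    crVec b (Equiv.swap 0 5) = -b 3 - b 1 := by rw [crVec]; rw [if_neg (by decide)]; rw [if_neg (by decide)]; rw [if_neg (by decide)]; rw [if_neg (by decide)]; rw [if_pos rfl]

theorem crVec_12 {V : Type*} [AddCommGroup V] (b : Fin 5 → V) :
    crVec b (Equiv.swap 1 2) = b 4 - b 1 - b 0 := by rw [crVec]; rw [if_neg (by decide)]; rw [if_neg (by decide)]; rw [if_neg (by decide)]; rw [if_neg (by decide)]; rw [if_neg (by decide)]; rw [if_pos rfl]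

theorem crVec_13 {V : Type*} [AddCommGroup V] (b : Fin 5 → V) :
    crVec b (Equiv.swap 1 3) = b 2 - b 0 - b 1 := by rw [crVec]; rw [if_neg (by decide)]; rw [if_neg (by decide)]; rw [if_neg (by decide)]; rw [if_neg (by decide)]; rw [if_neg (by decide)]; rw [if_neg (by decide)]; rw [if_pos rfl]

theorem crVec_14 {V : Type*} [AddCommGroup V] (b : Fin 5 → V) :
    crVec b (Equiv.swap 1 4) = b 3 := by rw [crVec]; rw [if_neg (by decide)]; rw [if_neg (by decide)]; rw [if_neg (by decide)]; rw [if_neg (by decide)]; rw [if_neg (by decide)]; rw [if_neg (by decide)]; rw [if_neg (by decide)]; rw [if_pos rfl]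

theorem crVec_23 {V : Type*} [AddCommGroup V] (b : Fin 5 → V) :
    crVec b (Equiv.swap 2 3) = b 1 := by rw [crVec]; rw [if_neg (by decide)]; rw [if_neg (by decide)]; rw [if_neg (by decide)]; rw [if_neg (by decide)]; rw [if_neg (by decide)]; rw [if_neg (by decide)]; rw [if_neg (by decide)]; rw [if_neg (by decide)]; rw [if_pos rfl]

theorem crVec_24 {V : Type*} [AddCommGroup V] (b : Fin 5 → V) :
    crVec b (Equiv.swap 2 4) = b 0 - b 2 - b 3 := by rw [crVec]; rw [if_neg (by decide)]; rw [if_neg (by decide)]; rw [if_neg (by decide)]; rw [if_neg (by decide)]; rw [if_neg (by decide)]; rw [if_neg (by decide)]; rw [if_neg (by decide)]; rw [if_neg (by decide)]; rw [if_neg (by decide)]; rw [if_pos rfl]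

theorem crVec_25 {V : Type*} [AddCommGroup V] (b : Fin 5 → V) :
    crVec b (Equiv.swap 2 5) = -b 3 - b 4 := by rw [crVec]; rw [if_neg (by decide)]; rw [if_neg (by decide)]; rw [if_neg (by decide)]; rw [if_neg (by decide)]; rw [if_neg (by decide)]; rw [if_neg (by decide)]; rw [if_neg (by decide)]; rw [if_neg (by decide)]; rw [if_neg (by decide)]; rw [if_neg (by decide)]; rw [if_pos rfl]

theorem crVec_34 {V : Type*} [AddCommGroup V] (b : Fin 5 → V) :
    crVec b (Equiv.swap 3 4) = b 0 - b 3 - b 4 := by rw [crVec]; rw [if_neg (by decide)]; rw [if_neg (by decide)]; rw [if_neg (by decide)]; rw [if_neg (by decide)]; rw [if_neg (by decide)]; rw [if_neg (by decide)]; rw [if_neg (by decide)]; rw [if_neg (by decide)]; rw [if_neg (by decide)]; rw [if_neg (by decide)]; rw [if_neg (by decide)]; rw [if_pos rfl]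

theorem crVec_35 {V : Type*} [AddCommGroup V] (b : Fin 5 → V) :
    crVec b (Equiv.swap 3 5) = -b 2 - b 3 := by rw [crVec]; rw [if_neg (by decide)]; rw [if_neg (by decide)]; rw [if_neg (by decide)]; rw [if_neg (by decide)]; rw [if_neg (by decide)]; rw [if_neg (by decide)]; rw [if_neg (by decide)]; rw [if_neg (by decide)]; rw [if_neg (by decide)]; rw [if_neg (by decide)]; rw [if_neg (by decide)]; rw [if_neg (by decide)]; rw [if_pos rfl]

theorem crVec_45 {V : Type*} [AddCommGroup V] (b : Fin 5 → V) :
    crVec b (Equiv.swap 4 5) = -b 1 - b 0 := by rw [crVec]; rw [if_neg (by decide)]; rw [if_neg (by decide)]; rw [if_neg (by decide)]; rw [if_neg (by decide)]; rw [if_neg (by decide)]; rw [if_neg (by decide)]; rw [if_neg (by decide)]; rw [if_neg (by decide)]; rw [if_neg (by decide)]; rw [if_neg (by decide)]; rw [if_neg (by decide)]; rw [if_neg (by decide)]; rw [if_neg (by decide)]; rw [if_pos rfl]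

theorem crVec_15 {V : Type*} [AddCommGroup V] (b : Fin 5 → V) :
    crVec b (Equiv.swap 1 5) = b 2 + b 3 + b 4 - b 0 := by rw [crVec]; rw [if_neg (by decide)]; rw [if_neg (by decide)]; rw [if_neg (by decide)]; rw [if_neg (by decide)]; rw [if_neg (by decide)]; rw [if_neg (by decide)]; rw [if_neg (by decide)]; rw [if_neg (by decide)]; rw [if_neg (by decide)]; rw [if_neg (by decide)]; rw [if_neg (by decide)]; rw [if_neg (by decide)]; rw [if_neg (by decide)]; rw [if_neg (by decide)]

section ConfigLemmas

open Submodule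

variable {k V : Type*} [Field k] [AddCommGroup V] [Module k V] [FiniteDimensional k V]
variable (𝒟 : CremonaRichmondConfig k V)

theorem CR_P_ne {σ σ' : {σ : Equiv.Perm (Fin 6) // σ.IsSwap}} (h : σ.1 ≠ σ'.1) :
    𝒟.P σ ≠ 𝒟.P σ' :=
  fun he => h (congrArg Subtype.val (𝒟.P_injective he))

theorem CR_span_of_mem {σ} {v : V} (hv : v ∈ 𝒟.P σ) (h0 : v ≠ 0) :
    𝒟.P σ = span k {v} :=
  (Submodule.eq_of_le_of_finrank_eq ((span_singleton_le_iff_mem _ _).mpr hv)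
    (by rw [finrank_span_singleton h0, 𝒟.finrank_P])).symm

theorem CR_exists_spanning (σ) : ∃ v : V, v ≠ 0 ∧ 𝒟.P σ = span k {v} := by
  have h1 := 𝒟.finrank_P σ
  have hne : 𝒟.P σ ≠ ⊥ := by
    intro hb; rw [hb] at h1; simp [finrank_bot] at h1
  obtain ⟨v, hv, hv0⟩ := Submodule.exists_mem_ne_zero_of_ne_bot hne
  exact ⟨v, hv0, CR_span_of_mem 𝒟 hv hv0⟩

/-- A point is contained in another point only if they are equal (as 1-dim spaces). -/
theorem CR_le_point {σ σ'} (h : σ.1 ≠ σ'.1) (hle : 𝒟.P σ ≤ 𝒟.P σ') : False :=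
  CR_P_ne 𝒟 h (Submodule.eq_of_le_of_finrank_eq hle (by rw [𝒟.finrank_P, 𝒟.finrank_P]))

theorem CR_line_eq_sup (ρ : {ρ : Equiv.Perm (Fin 6) // IsFPFInvolution ρ})
    (σa σb : {σ : Equiv.Perm (Fin 6) // σ.IsSwap}) (hca : σa.1 * ρ.1 = ρ.1 * σa.1)
    (hcb : σb.1 * ρ.1 = ρ.1 * σb.1) (hab : σa.1 ≠ σb.1) :
    𝒟.L ρ = 𝒟.P σa ⊔ 𝒟.P σb := by
  have ha : 𝒟.P σa ≤ 𝒟.L ρ := (𝒟.incidence σa ρ).mpr hca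
  have hb : 𝒟.P σb ≤ 𝒟.L ρ := (𝒟.incidence σb ρ).mpr hcb
  have hinf : 𝒟.P σa ⊓ 𝒟.P σb = ⊥ := by
    by_contra h
    have h1 : 𝒟.P σa ⊓ 𝒟.P σb ≤ 𝒟.P σa := inf_le_left
    have h2 : Module.finrank k ↥(𝒟.P σa ⊓ 𝒟.P σb) ≠ 0 :=
      fun h0 => h (Submodule.finrank_eq_zero.mp h0)
    have h3 : Module.finrank k ↥(𝒟.P σa ⊓ 𝒟.P σb) ≤ 1 := by
      have := Submodule.finrank_mono (R := k) h1; rw [𝒟.finrank_P] at this; exact this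
    have h4 : 𝒟.P σa ⊓ 𝒟.P σb = 𝒟.P σa :=
      Submodule.eq_of_le_of_finrank_eq h1 (by rw [𝒟.finrank_P]; omega)
    have h5 : 𝒟.P σa ⊓ 𝒟.P σb = 𝒟.P σb :=
      Submodule.eq_of_le_of_finrank_eq inf_le_right (by rw [𝒟.finrank_P]; omega)
    exact CR_P_ne 𝒟 hab (h4.symm.trans h5)
  have hr : Module.finrank k ↥(𝒟.P σa ⊔ 𝒟.P σb) = 2 := by
    have := Submodule.finrank_sup_add_finrank_inf_eq (𝒟.P σa) (𝒟.P σb)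
    rw [hinf, finrank_bot, 𝒟.finrank_P, 𝒟.finrank_P] at this; omega
  exact (Submodule.eq_of_le_of_finrank_eq (sup_le ha hb) (by rw [hr, 𝒟.finrank_L])).symm

theorem CR_third_le (ρ : {ρ : Equiv.Perm (Fin 6) // IsFPFInvolution ρ})
    (σa σb σc : {σ : Equiv.Perm (Fin 6) // σ.IsSwap}) (hca : σa.1 * ρ.1 = ρ.1 * σa.1)
    (hcb : σb.1 * ρ.1 = ρ.1 * σb.1) (hcc : σc.1 * ρ.1 = ρ.1 * σc.1)
    (hab : σa.1 ≠ σb.1) :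
    𝒟.P σc ≤ 𝒟.P σa ⊔ 𝒟.P σb :=
  (CR_line_eq_sup 𝒟 ρ σa σb hca hcb hab) ▸ (𝒟.incidence σc ρ).mpr hcc

theorem CR_pts_indep {σa σb} (hab : σa.1 ≠ σb.1) {xa xb : V}
    (ha : xa ∈ 𝒟.P σa) (hb : xb ∈ 𝒟.P σb) (ha0 : xa ≠ 0) (hb0 : xb ≠ 0)
    {a b : k} (h : a • xa + b • xb = 0) : a = 0 ∧ b = 0 := by
  have haz : a = 0 := by
    by_contra ha'
    have hxa : xa = (-(a⁻¹ * b)) • xb := by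
      have : a • xa = -(b • xb) := by linear_combination (norm := module) h
      calc xa = a⁻¹ • (a • xa) := by rw [smul_smul, inv_mul_cancel₀ ha', one_smul]
        _ = (-(a⁻¹ * b)) • xb := by rw [this, smul_neg, smul_smul]; module
    have hle : 𝒟.P σa ≤ 𝒟.P σb := by
      rw [CR_span_of_mem 𝒟 ha ha0]
      refine (span_singleton_le_iff_mem _ _).mpr ?_
      rw [hxa]; exact Submodule.smul_mem _ _ hb
    exact absurd hle (fun hle => CR_le_point 𝒟 hab hle)
  refine ⟨haz, ?_⟩
  rw [haz, zero_smul, zero_add] at h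
  exact (smul_eq_zero.mp h).resolve_right hb0

theorem CR_tri (ρ : {ρ : Equiv.Perm (Fin 6) // IsFPFInvolution ρ})
    (σa σb σc : {σ : Equiv.Perm (Fin 6) // σ.IsSwap}) (hca : σa.1 * ρ.1 = ρ.1 * σa.1)
    (hcb : σb.1 * ρ.1 = ρ.1 * σb.1) (hcc : σc.1 * ρ.1 = ρ.1 * σc.1)
    (hab : σa.1 ≠ σb.1) (hac : σa.1 ≠ σc.1) (hbc : σb.1 ≠ σc.1)
    {xa : V} (hxa : xa ∈ 𝒟.P σa) (hxa0 : xa ≠ 0) :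
    ∃ xb xc : V, xb ∈ 𝒟.P σb ∧ xc ∈ 𝒟.P σc ∧ xb ≠ 0 ∧ xc ≠ 0 ∧ xa + xb + xc = 0 := by
  obtain ⟨yb, hyb0, hPb⟩ := CR_exists_spanning 𝒟 σb
  obtain ⟨yc, hyc0, hPc⟩ := CR_exists_spanning 𝒟 σc
  have hycPc : yc ∈ 𝒟.P σc := by rw [hPc]; exact mem_span_singleton_self _
  have hmem : yc ∈ 𝒟.P σa ⊔ 𝒟.P σb :=
    CR_third_le 𝒟 ρ σa σb σc hca hcb hcc hab hycPc
  rw [CR_span_of_mem 𝒟 hxa hxa0, hPb, Submodule.mem_sup] at hmem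
  obtain ⟨u, hu, w, hw, huw⟩ := hmem
  rw [mem_span_singleton] at hu hw
  obtain ⟨a, rfl⟩ := hu
  obtain ⟨b, rfl⟩ := hw
  have ha0 : a ≠ 0 := by
    rintro rfl
    rw [zero_smul, zero_add] at huw
    refine CR_le_point 𝒟 (Ne.symm hbc) ?_
    rw [hPc, hPb, span_singleton_le_iff_mem, ← huw]
    exact Submodule.smul_mem _ _ (mem_span_singleton_self _)
  have hb0 : b ≠ 0 := by
    rintro rfl
    rw [zero_smul, add_zero] at huw
    refine CR_le_point 𝒟 (Ne.symm hac) ?_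
    rw [hPc, CR_span_of_mem 𝒟 hxa hxa0, span_singleton_le_iff_mem, ← huw]
    exact Submodule.smul_mem _ _ (mem_span_singleton_self _)
  refine ⟨(a⁻¹ * b) • yb, (-a⁻¹) • yc,
    Submodule.smul_mem _ _ (by rw [hPb]; exact mem_span_singleton_self _),
    Submodule.smul_mem _ _ hycPc,
    smul_ne_zero (mul_ne_zero (inv_ne_zero ha0) hb0) hyb0,
    smul_ne_zero (neg_ne_zero.mpr (inv_ne_zero ha0)) hyc0, ?_⟩
  rw [← huw]
  match_scalars <;> field_simp <;> ring


theorem CR_decomp (ρ : {ρ : Equiv.Perm (Fin 6) // IsFPFInvolution ρ})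
    (σ σa σb : {σ : Equiv.Perm (Fin 6) // σ.IsSwap})
    (hc : σ.1 * ρ.1 = ρ.1 * σ.1) (hca : σa.1 * ρ.1 = ρ.1 * σa.1)
    (hcb : σb.1 * ρ.1 = ρ.1 * σb.1) (hab : σa.1 ≠ σb.1)
    (hσa : σ.1 ≠ σa.1) (hσb : σ.1 ≠ σb.1)
    {wa wb : V} (hwa : 𝒟.P σa = span k {wa}) (hwb : 𝒟.P σb = span k {wb}) :
    ∃ (v : V) (x y : k), v ≠ 0 ∧ 𝒟.P σ = span k {v} ∧ v = x • wa + y • wb ∧ x ≠ 0 ∧ y ≠ 0 := by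
  obtain ⟨v, hv0, hPv⟩ := CR_exists_spanning 𝒟 σ
  have hvmem : v ∈ 𝒟.P σ := by rw [hPv]; exact mem_span_singleton_self _
  have hmem : v ∈ 𝒟.P σa ⊔ 𝒟.P σb := CR_third_le 𝒟 ρ σa σb σ hca hcb hc hab hvmem
  rw [hwa, hwb, Submodule.mem_sup] at hmem
  obtain ⟨u, hu, w, hw, huw⟩ := hmem
  rw [mem_span_singleton] at hu hw
  obtain ⟨x, rfl⟩ := hu; obtain ⟨y, rfl⟩ := hw
  have hx : x ≠ 0 := by
    rintro rfl
    rw [zero_smul, zero_add] at huw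
    refine CR_le_point 𝒟 hσb ?_
    rw [hPv, hwb, span_singleton_le_iff_mem, ← huw]
    exact Submodule.smul_mem _ _ (mem_span_singleton_self _)
  have hy : y ≠ 0 := by
    rintro rfl
    rw [zero_smul, add_zero] at huw
    refine CR_le_point 𝒟 hσa ?_
    rw [hPv, hwa, span_singleton_le_iff_mem, ← huw]
    exact Submodule.smul_mem _ _ (mem_span_singleton_self _)
  exact ⟨v, x, y, hv0, hPv, huw.symm, hx, hy⟩

theorem CR_indep5 (h5 : Module.finrank k V = 5)
    {w01 w23 w02 w14 w03 : V}
    (h01 : w01 ∈ 𝒟.P (S 0 1)) (h23 : w23 ∈ 𝒟.P (S 2 3)) (h02 : w02 ∈ 𝒟.P (S 0 2))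
    (h14 : w14 ∈ 𝒟.P (S 1 4)) (h03 : w03 ∈ 𝒟.P (S 0 3))
    (n01 : w01 ≠ 0) (n23 : w23 ≠ 0) (n02 : w02 ≠ 0) (n14 : w14 ≠ 0) (n03 : w03 ≠ 0) :
    ∀ c0 c1 c2 c3 c4 : k,
      c0 • w01 + c1 • w23 + c2 • w02 + c3 • w14 + c4 • w03 = 0 →
      c0 = 0 ∧ c1 = 0 ∧ c2 = 0 ∧ c3 = 0 ∧ c4 = 0 := by
  have hinfDA : 𝒟.L (R (Equiv.swap 0 1 * Equiv.swap 2 3 * Equiv.swap 4 5)) ⊓ 𝒟.L (R (Equiv.swap 0 2 * Equiv.swap 1 4 * Equiv.swap 3 5)) = ⊥ :=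
    𝒟.lines_meet_trivially _ _
      (fun h => by have := congrArg Subtype.val h; revert this; decide) (by decide)
  have hle01 : 𝒟.P (S 0 1) ≤ 𝒟.L (R (Equiv.swap 0 1 * Equiv.swap 2 3 * Equiv.swap 4 5)) := (𝒟.incidence _ _).mpr (by decide)
  have hle23 : 𝒟.P (S 2 3) ≤ 𝒟.L (R (Equiv.swap 0 1 * Equiv.swap 2 3 * Equiv.swap 4 5)) := (𝒟.incidence _ _).mpr (by decide)
  have hle02 : 𝒟.P (S 0 2) ≤ 𝒟.L (R (Equiv.swap 0 2 * Equiv.swap 1 4 * Equiv.swap 3 5)) := (𝒟.incidence _ _).mpr (by decide)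
  have hle14 : 𝒟.P (S 1 4) ≤ 𝒟.L (R (Equiv.swap 0 2 * Equiv.swap 1 4 * Equiv.swap 3 5)) := (𝒟.incidence _ _).mpr (by decide)
  have hP03U4 : ¬ (𝒟.P (S 0 3) ≤ (𝒟.L (R (Equiv.swap 0 1 * Equiv.swap 2 3 * Equiv.swap 4 5)) ⊔ 𝒟.L (R (Equiv.swap 0 2 * Equiv.swap 1 4 * Equiv.swap 3 5)))) := by
    intro h03U
    have hLD : 𝒟.L (R (Equiv.swap 0 1 * Equiv.swap 2 3 * Equiv.swap 4 5)) ≤ (𝒟.L (R (Equiv.swap 0 1 * Equiv.swap 2 3 * Equiv.swap 4 5)) ⊔ 𝒟.L (R (Equiv.swap 0 2 * Equiv.swap 1 4 * Equiv.swap 3 5))) := le_sup_left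
    have hLA : 𝒟.L (R (Equiv.swap 0 2 * Equiv.swap 1 4 * Equiv.swap 3 5)) ≤ (𝒟.L (R (Equiv.swap 0 1 * Equiv.swap 2 3 * Equiv.swap 4 5)) ⊔ 𝒟.L (R (Equiv.swap 0 2 * Equiv.swap 1 4 * Equiv.swap 3 5))) := le_sup_right
    have u01 : 𝒟.P (S 0 1) ≤ (𝒟.L (R (Equiv.swap 0 1 * Equiv.swap 2 3 * Equiv.swap 4 5)) ⊔ 𝒟.L (R (Equiv.swap 0 2 * Equiv.swap 1 4 * Equiv.swap 3 5))) := le_trans hle01 hLD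
    have u23 : 𝒟.P (S 2 3) ≤ (𝒟.L (R (Equiv.swap 0 1 * Equiv.swap 2 3 * Equiv.swap 4 5)) ⊔ 𝒟.L (R (Equiv.swap 0 2 * Equiv.swap 1 4 * Equiv.swap 3 5))) := le_trans hle23 hLD
    have u45 : 𝒟.P (S 4 5) ≤ (𝒟.L (R (Equiv.swap 0 1 * Equiv.swap 2 3 * Equiv.swap 4 5)) ⊔ 𝒟.L (R (Equiv.swap 0 2 * Equiv.swap 1 4 * Equiv.swap 3 5))) :=
      le_trans ((𝒟.incidence _ (R (Equiv.swap 0 1 * Equiv.swap 2 3 * Equiv.swap 4 5))).mpr (by decide)) hLD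
    have u02 : 𝒟.P (S 0 2) ≤ (𝒟.L (R (Equiv.swap 0 1 * Equiv.swap 2 3 * Equiv.swap 4 5)) ⊔ 𝒟.L (R (Equiv.swap 0 2 * Equiv.swap 1 4 * Equiv.swap 3 5))) := le_trans hle02 hLA
    have u14 : 𝒟.P (S 1 4) ≤ (𝒟.L (R (Equiv.swap 0 1 * Equiv.swap 2 3 * Equiv.swap 4 5)) ⊔ 𝒟.L (R (Equiv.swap 0 2 * Equiv.swap 1 4 * Equiv.swap 3 5))) := le_trans hle14 hLA
    have u35 : 𝒟.P (S 3 5) ≤ (𝒟.L (R (Equiv.swap 0 1 * Equiv.swap 2 3 * Equiv.swap 4 5)) ⊔ 𝒟.L (R (Equiv.swap 0 2 * Equiv.swap 1 4 * Equiv.swap 3 5))) :=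
      le_trans ((𝒟.incidence _ (R (Equiv.swap 0 2 * Equiv.swap 1 4 * Equiv.swap 3 5))).mpr (by decide)) hLA
    have u25 : 𝒟.P (S 2 5) ≤ (𝒟.L (R (Equiv.swap 0 1 * Equiv.swap 2 3 * Equiv.swap 4 5)) ⊔ 𝒟.L (R (Equiv.swap 0 2 * Equiv.swap 1 4 * Equiv.swap 3 5))) :=
      le_trans (CR_third_le 𝒟 (R (Equiv.swap 0 3 * Equiv.swap 1 4 * Equiv.swap 2 5)) (S 0 3) (S 1 4) (S 2 5)
        (by decide) (by decide) (by decide) (by decide)) (sup_le h03U u14)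
    have u05 : 𝒟.P (S 0 5) ≤ (𝒟.L (R (Equiv.swap 0 1 * Equiv.swap 2 3 * Equiv.swap 4 5)) ⊔ 𝒟.L (R (Equiv.swap 0 2 * Equiv.swap 1 4 * Equiv.swap 3 5))) :=
      le_trans (CR_third_le 𝒟 (R (Equiv.swap 0 5 * Equiv.swap 1 4 * Equiv.swap 2 3)) (S 1 4) (S 2 3) (S 0 5)
        (by decide) (by decide) (by decide) (by decide)) (sup_le u14 u23)
    have u12 : 𝒟.P (S 1 2) ≤ (𝒟.L (R (Equiv.swap 0 1 * Equiv.swap 2 3 * Equiv.swap 4 5)) ⊔ 𝒟.L (R (Equiv.swap 0 2 * Equiv.swap 1 4 * Equiv.swap 3 5))) :=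
      le_trans (CR_third_le 𝒟 (R (Equiv.swap 0 3 * Equiv.swap 1 2 * Equiv.swap 4 5)) (S 0 3) (S 4 5) (S 1 2)
        (by decide) (by decide) (by decide) (by decide)) (sup_le h03U u45)
    have u13 : 𝒟.P (S 1 3) ≤ (𝒟.L (R (Equiv.swap 0 1 * Equiv.swap 2 3 * Equiv.swap 4 5)) ⊔ 𝒟.L (R (Equiv.swap 0 2 * Equiv.swap 1 4 * Equiv.swap 3 5))) :=
      le_trans (CR_third_le 𝒟 (R (Equiv.swap 0 2 * Equiv.swap 1 3 * Equiv.swap 4 5)) (S 0 2) (S 4 5) (S 1 3)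
        (by decide) (by decide) (by decide) (by decide)) (sup_le u02 u45)
    have u24 : 𝒟.P (S 2 4) ≤ (𝒟.L (R (Equiv.swap 0 1 * Equiv.swap 2 3 * Equiv.swap 4 5)) ⊔ 𝒟.L (R (Equiv.swap 0 2 * Equiv.swap 1 4 * Equiv.swap 3 5))) :=
      le_trans (CR_third_le 𝒟 (R (Equiv.swap 0 1 * Equiv.swap 2 4 * Equiv.swap 3 5)) (S 0 1) (S 3 5) (S 2 4)
        (by decide) (by decide) (by decide) (by decide)) (sup_le u01 u35)
    have u34 : 𝒟.P (S 3 4) ≤ (𝒟.L (R (Equiv.swap 0 1 * Equiv.swap 2 3 * Equiv.swap 4 5)) ⊔ 𝒟.L (R (Equiv.swap 0 2 * Equiv.swap 1 4 * Equiv.swap 3 5))) :=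
      le_trans (CR_third_le 𝒟 (R (Equiv.swap 0 1 * Equiv.swap 2 5 * Equiv.swap 3 4)) (S 0 1) (S 2 5) (S 3 4)
        (by decide) (by decide) (by decide) (by decide)) (sup_le u01 u25)
    have u15 : 𝒟.P (S 1 5) ≤ (𝒟.L (R (Equiv.swap 0 1 * Equiv.swap 2 3 * Equiv.swap 4 5)) ⊔ 𝒟.L (R (Equiv.swap 0 2 * Equiv.swap 1 4 * Equiv.swap 3 5))) :=
      le_trans (CR_third_le 𝒟 (R (Equiv.swap 0 3 * Equiv.swap 1 5 * Equiv.swap 2 4)) (S 0 3) (S 2 4) (S 1 5)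
        (by decide) (by decide) (by decide) (by decide)) (sup_le h03U u24)
    have u04 : 𝒟.P (S 0 4) ≤ (𝒟.L (R (Equiv.swap 0 1 * Equiv.swap 2 3 * Equiv.swap 4 5)) ⊔ 𝒟.L (R (Equiv.swap 0 2 * Equiv.swap 1 4 * Equiv.swap 3 5))) :=
      le_trans (CR_third_le 𝒟 (R (Equiv.swap 0 4 * Equiv.swap 1 5 * Equiv.swap 2 3)) (S 1 5) (S 2 3) (S 0 4)
        (by decide) (by decide) (by decide) (by decide)) (sup_le u15 u23)
    have hAllP : ∀ σ : {σ : Equiv.Perm (Fin 6) // σ.IsSwap}, 𝒟.P σ ≤ (𝒟.L (R (Equiv.swap 0 1 * Equiv.swap 2 3 * Equiv.swap 4 5)) ⊔ 𝒟.L (R (Equiv.swap 0 2 * Equiv.swap 1 4 * Equiv.swap 3 5))) := by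
      intro σ
      have hm := swap_enum σ.1 σ.2
      simp only [List.mem_cons, List.not_mem_nil, or_false] at hm
      rcases hm with h|h|h|h|h|h|h|h|h|h|h|h|h|h|h
      · rw [show σ = S 0 1 from Subtype.ext h]; exact u01
      · rw [show σ = S 0 2 from Subtype.ext h]; exact u02
      · rw [show σ = S 0 3 from Subtype.ext h]; exact h03U
      · rw [show σ = S 0 4 from Subtype.ext h]; exact u04
      · rw [show σ = S 0 5 from Subtype.ext h]; exact u05
      · rw [show σ = S 1 2 from Subtype.ext h]; exact u12
      · rw [show σ = S 1 3 from Subtype.ext h]; exact u13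
      · rw [show σ = S 1 4 from Subtype.ext h]; exact u14
      · rw [show σ = S 1 5 from Subtype.ext h]; exact u15
      · rw [show σ = S 2 3 from Subtype.ext h]; exact u23
      · rw [show σ = S 2 4 from Subtype.ext h]; exact u24
      · rw [show σ = S 2 5 from Subtype.ext h]; exact u25
      · rw [show σ = S 3 4 from Subtype.ext h]; exact u34
      · rw [show σ = S 3 5 from Subtype.ext h]; exact u35
      · rw [show σ = S 4 5 from Subtype.ext h]; exact u45
    have hAllL : ∀ ρ : {ρ : Equiv.Perm (Fin 6) // IsFPFInvolution ρ}, 𝒟.L ρ ≤ (𝒟.L (R (Equiv.swap 0 1 * Equiv.swap 2 3 * Equiv.swap 4 5)) ⊔ 𝒟.L (R (Equiv.swap 0 2 * Equiv.swap 1 4 * Equiv.swap 3 5))) := by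
      intro ρ
      have hm := fpf_enum ρ.1 ρ.2
      simp only [List.mem_cons, List.not_mem_nil, or_false] at hm
      rcases hm with h|h|h|h|h|h|h|h|h|h|h|h|h|h|h
      · rw [show ρ = R (Equiv.swap 0 1 * Equiv.swap 2 3 * Equiv.swap 4 5) from Subtype.ext h]
        exact (CR_line_eq_sup 𝒟 _ (S 0 1) (S 2 3) (by decide) (by decide)
          (by decide)).le.trans (sup_le (hAllP _) (hAllP _))
      · rw [show ρ = R (Equiv.swap 0 1 * Equiv.swap 2 4 * Equiv.swap 3 5) from Subtype.ext h]
        exact (CR_line_eq_sup 𝒟 _ (S 0 1) (S 2 4) (by decide) (by decide)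
          (by decide)).le.trans (sup_le (hAllP _) (hAllP _))
      · rw [show ρ = R (Equiv.swap 0 1 * Equiv.swap 2 5 * Equiv.swap 3 4) from Subtype.ext h]
        exact (CR_line_eq_sup 𝒟 _ (S 0 1) (S 2 5) (by decide) (by decide)
          (by decide)).le.trans (sup_le (hAllP _) (hAllP _))
      · rw [show ρ = R (Equiv.swap 0 2 * Equiv.swap 1 3 * Equiv.swap 4 5) from Subtype.ext h]
        exact (CR_line_eq_sup 𝒟 _ (S 0 2) (S 1 3) (by decide) (by decide)
          (by decide)).le.trans (sup_le (hAllP _) (hAllP _))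
      · rw [show ρ = R (Equiv.swap 0 2 * Equiv.swap 1 4 * Equiv.swap 3 5) from Subtype.ext h]
        exact (CR_line_eq_sup 𝒟 _ (S 0 2) (S 1 4) (by decide) (by decide)
          (by decide)).le.trans (sup_le (hAllP _) (hAllP _))
      · rw [show ρ = R (Equiv.swap 0 2 * Equiv.swap 1 5 * Equiv.swap 3 4) from Subtype.ext h]
        exact (CR_line_eq_sup 𝒟 _ (S 0 2) (S 1 5) (by decide) (by decide)
          (by decide)).le.trans (sup_le (hAllP _) (hAllP _))
      · rw [show ρ = R (Equiv.swap 0 3 * Equiv.swap 1 2 * Equiv.swap 4 5) from Subtype.ext h]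
        exact (CR_line_eq_sup 𝒟 _ (S 0 3) (S 1 2) (by decide) (by decide)
          (by decide)).le.trans (sup_le (hAllP _) (hAllP _))
      · rw [show ρ = R (Equiv.swap 0 3 * Equiv.swap 1 4 * Equiv.swap 2 5) from Subtype.ext h]
        exact (CR_line_eq_sup 𝒟 _ (S 0 3) (S 1 4) (by decide) (by decide)
          (by decide)).le.trans (sup_le (hAllP _) (hAllP _))
      · rw [show ρ = R (Equiv.swap 0 3 * Equiv.swap 1 5 * Equiv.swap 2 4) from Subtype.ext h]
        exact (CR_line_eq_sup 𝒟 _ (S 0 3) (S 1 5) (by decide) (by decide)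
          (by decide)).le.trans (sup_le (hAllP _) (hAllP _))
      · rw [show ρ = R (Equiv.swap 0 4 * Equiv.swap 1 2 * Equiv.swap 3 5) from Subtype.ext h]
        exact (CR_line_eq_sup 𝒟 _ (S 0 4) (S 1 2) (by decide) (by decide)
          (by decide)).le.trans (sup_le (hAllP _) (hAllP _))
      · rw [show ρ = R (Equiv.swap 0 4 * Equiv.swap 1 3 * Equiv.swap 2 5) from Subtype.ext h]
        exact (CR_line_eq_sup 𝒟 _ (S 0 4) (S 1 3) (by decide) (by decide)
          (by decide)).le.trans (sup_le (hAllP _) (hAllP _))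
      · rw [show ρ = R (Equiv.swap 0 4 * Equiv.swap 1 5 * Equiv.swap 2 3) from Subtype.ext h]
        exact (CR_line_eq_sup 𝒟 _ (S 0 4) (S 1 5) (by decide) (by decide)
          (by decide)).le.trans (sup_le (hAllP _) (hAllP _))
      · rw [show ρ = R (Equiv.swap 0 5 * Equiv.swap 1 2 * Equiv.swap 3 4) from Subtype.ext h]
        exact (CR_line_eq_sup 𝒟 _ (S 0 5) (S 1 2) (by decide) (by decide)
          (by decide)).le.trans (sup_le (hAllP _) (hAllP _))
      · rw [show ρ = R (Equiv.swap 0 5 * Equiv.swap 1 3 * Equiv.swap 2 4) from Subtype.ext h]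
        exact (CR_line_eq_sup 𝒟 _ (S 0 5) (S 1 3) (by decide) (by decide)
          (by decide)).le.trans (sup_le (hAllP _) (hAllP _))
      · rw [show ρ = R (Equiv.swap 0 5 * Equiv.swap 1 4 * Equiv.swap 2 3) from Subtype.ext h]
        exact (CR_line_eq_sup 𝒟 _ (S 0 5) (S 1 4) (by decide) (by decide)
          (by decide)).le.trans (sup_le (hAllP _) (hAllP _))
    have htop : ((𝒟.L (R (Equiv.swap 0 1 * Equiv.swap 2 3 * Equiv.swap 4 5)) ⊔ 𝒟.L (R (Equiv.swap 0 2 * Equiv.swap 1 4 * Equiv.swap 3 5))) : Submodule k V) = ⊤ :=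
      top_unique (by rw [← 𝒟.lines_span]; exact iSup_le hAllL)
    have h4 : Module.finrank k ↥(𝒟.L (R (Equiv.swap 0 1 * Equiv.swap 2 3 * Equiv.swap 4 5)) ⊔ 𝒟.L (R (Equiv.swap 0 2 * Equiv.swap 1 4 * Equiv.swap 3 5))) = 5 := by rw [htop, finrank_top, h5]
    have hsum := Submodule.finrank_sup_add_finrank_inf_eq (𝒟.L (R (Equiv.swap 0 1 * Equiv.swap 2 3 * Equiv.swap 4 5))) (𝒟.L (R (Equiv.swap 0 2 * Equiv.swap 1 4 * Equiv.swap 3 5)))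
    rw [hinfDA, finrank_bot, 𝒟.finrank_L, 𝒟.finrank_L, h4] at hsum
    omega
  intro c0 c1 c2 c3 c4 h
  have hc4 : c4 = 0 := by
    by_contra hc4
    apply hP03U4
    have hw03U : w03 ∈ (𝒟.L (R (Equiv.swap 0 1 * Equiv.swap 2 3 * Equiv.swap 4 5)) ⊔ 𝒟.L (R (Equiv.swap 0 2 * Equiv.swap 1 4 * Equiv.swap 3 5))) := by
      refine (Submodule.smul_mem_iff _ hc4).mp ?_
      have he : c4 • w03 = -(c0 • w01 + c1 • w23 + c2 • w02 + c3 • w14) := by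
        linear_combination (norm := module) h
      rw [he]
      exact neg_mem (add_mem (add_mem (add_mem
        (Submodule.smul_mem _ _ (le_trans hle01 le_sup_left h01))
        (Submodule.smul_mem _ _ (le_trans hle23 le_sup_left h23)))
        (Submodule.smul_mem _ _ (le_trans hle02 le_sup_right h02)))
        (Submodule.smul_mem _ _ (le_trans hle14 le_sup_right h14)))
    rw [CR_span_of_mem 𝒟 h03 n03]
    exact (span_singleton_le_iff_mem _ _).mpr hw03U
  rw [hc4, zero_smul, add_zero] at h
  have hmemD : c0 • w01 + c1 • w23 ∈ 𝒟.L (R (Equiv.swap 0 1 * Equiv.swap 2 3 * Equiv.swap 4 5)) :=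
    add_mem (Submodule.smul_mem _ _ (hle01 h01)) (Submodule.smul_mem _ _ (hle23 h23))
  have hmemA : c0 • w01 + c1 • w23 ∈ 𝒟.L (R (Equiv.swap 0 2 * Equiv.swap 1 4 * Equiv.swap 3 5)) := by
    have he : c0 • w01 + c1 • w23 = -(c2 • w02 + c3 • w14) := by
      linear_combination (norm := module) h
    rw [he]
    exact neg_mem (add_mem (Submodule.smul_mem _ _ (hle02 h02))
      (Submodule.smul_mem _ _ (hle14 h14)))
  have hz : c0 • w01 + c1 • w23 = 0 := by
    have : c0 • w01 + c1 • w23 ∈ 𝒟.L (R (Equiv.swap 0 1 * Equiv.swap 2 3 * Equiv.swap 4 5)) ⊓ 𝒟.L (R (Equiv.swap 0 2 * Equiv.swap 1 4 * Equiv.swap 3 5)) := ⟨hmemD, hmemA⟩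
    rw [hinfDA] at this
    simpa using this
  obtain ⟨hc0, hc1⟩ := CR_pts_indep 𝒟 (show (S 0 1).1 ≠ (S 2 3).1 by decide) h01 h23 n01 n23 hz
  have hz2 : c2 • w02 + c3 • w14 = 0 := by
    rw [hc0, hc1] at h
    linear_combination (norm := module) h
  obtain ⟨hc2, hc3⟩ := CR_pts_indep 𝒟 (show (S 0 2).1 ≠ (S 1 4).1 by decide) h02 h14 n02 n14 hz2
  exact ⟨hc0, hc1, hc2, hc3, hc4⟩

end ConfigLemmas

theorem S_val (i j : Fin 6) (h : i ≠ j) : (S i j h).1 = Equiv.swap i j := rfl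

open Submodule in
theorem crCoord {k V : Type*} [Field k] [AddCommGroup V] [Module k V] [FiniteDimensional k V]
    (𝒟 : CremonaRichmondConfig k V) (h5 : Module.finrank k V = 5) :
    ∃ b : Fin 5 → V, LinearIndependent k b ∧
      ∀ σ, 𝒟.P σ = Submodule.span k {crVec b σ.1} := by
  classical
  obtain ⟨w02, n02, sp02⟩ := CR_exists_spanning 𝒟 (S 0 2)
  have h02m : w02 ∈ 𝒟.P (S 0 2) := by rw [sp02]; exact mem_span_singleton_self _
  -- line (02)(14)(35)
  obtain ⟨w14, w35, h14m, h35m, n14, n35, hsum1⟩ :=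
    CR_tri 𝒟 (R (Equiv.swap 0 2 * Equiv.swap 1 4 * Equiv.swap 3 5)) (S 0 2) (S 1 4) (S 3 5)
      (by decide) (by decide) (by decide) (by decide) (by decide) (by decide) h02m n02
  -- line (03)(14)(25)
  obtain ⟨w03, w25, h03m, h25m, n03, n25, hsum2⟩ :=
    CR_tri 𝒟 (R (Equiv.swap 0 3 * Equiv.swap 1 4 * Equiv.swap 2 5)) (S 1 4) (S 0 3) (S 2 5)
      (by decide) (by decide) (by decide) (by decide) (by decide) (by decide) h14m n14
  -- line (05)(14)(23)
  obtain ⟨w23, w05, h23m, h05m, n23, n05, hsum3⟩ :=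
    CR_tri 𝒟 (R (Equiv.swap 0 5 * Equiv.swap 1 4 * Equiv.swap 2 3)) (S 1 4) (S 2 3) (S 0 5)
      (by decide) (by decide) (by decide) (by decide) (by decide) (by decide) h14m n14
  -- line (01)(23)(45)
  obtain ⟨w01, w45, h01m, h45m, n01, n45, hsum4⟩ :=
    CR_tri 𝒟 (R (Equiv.swap 0 1 * Equiv.swap 2 3 * Equiv.swap 4 5)) (S 2 3) (S 0 1) (S 4 5)
      (by decide) (by decide) (by decide) (by decide) (by decide) (by decide) h23m n23
  have h35 : w35 = -w02 - w14 := by linear_combination (norm := module) hsum1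
  have h25 : w25 = -w14 - w03 := by linear_combination (norm := module) hsum2
  have h05 : w05 = -w14 - w23 := by linear_combination (norm := module) hsum3
  have h45 : w45 = -w23 - w01 := by linear_combination (norm := module) hsum4
  have sp01 : 𝒟.P (S 0 1) = span k {w01} := CR_span_of_mem 𝒟 h01m n01
  have sp23 : 𝒟.P (S 2 3) = span k {w23} := CR_span_of_mem 𝒟 h23m n23
  have sp14 : 𝒟.P (S 1 4) = span k {w14} := CR_span_of_mem 𝒟 h14m n14
  have sp03 : 𝒟.P (S 0 3) = span k {w03} := CR_span_of_mem 𝒟 h03m n03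
  have sp45 : 𝒟.P (S 4 5) = span k {-w23 - w01} := by
    rw [CR_span_of_mem 𝒟 h45m n45, h45]
  have sp35 : 𝒟.P (S 3 5) = span k {-w02 - w14} := by
    rw [CR_span_of_mem 𝒟 h35m n35, h35]
  have sp25 : 𝒟.P (S 2 5) = span k {-w14 - w03} := by
    rw [CR_span_of_mem 𝒟 h25m n25, h25]
  have sp05 : 𝒟.P (S 0 5) = span k {-w14 - w23} := by
    rw [CR_span_of_mem 𝒟 h05m n05, h05]
  have indep5 := CR_indep5 𝒟 h5 h01m h23m h02m h14m h03m n01 n23 n02 n14 n03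
  -- the four singly-constrained points
  obtain ⟨v13, x1, y1, n13, hsp13, hv13, hx1, hy1⟩ :=
    CR_decomp 𝒟 (R (Equiv.swap 0 2 * Equiv.swap 1 3 * Equiv.swap 4 5)) (S 1 3) (S 0 2) (S 4 5)
      (by decide) (by decide) (by decide) (by decide) (by decide) (by decide) sp02
      (CR_span_of_mem 𝒟 h45m n45)
  rw [h45] at hv13
  obtain ⟨v12, x2, y2, n12, hsp12, hv12, hx2, hy2⟩ :=
    CR_decomp 𝒟 (R (Equiv.swap 0 3 * Equiv.swap 1 2 * Equiv.swap 4 5)) (S 1 2) (S 0 3) (S 4 5)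
      (by decide) (by decide) (by decide) (by decide) (by decide) (by decide) sp03
      (CR_span_of_mem 𝒟 h45m n45)
  rw [h45] at hv12
  obtain ⟨v24, x3, y3, n24, hsp24, hv24, hx3, hy3⟩ :=
    CR_decomp 𝒟 (R (Equiv.swap 0 1 * Equiv.swap 2 4 * Equiv.swap 3 5)) (S 2 4) (S 0 1) (S 3 5)
      (by decide) (by decide) (by decide) (by decide) (by decide) (by decide) sp01
      (CR_span_of_mem 𝒟 h35m n35)
  rw [h35] at hv24
  obtain ⟨v34, x4, y4, n34, hsp34, hv34, hx4, hy4⟩ :=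
    CR_decomp 𝒟 (R (Equiv.swap 0 1 * Equiv.swap 2 5 * Equiv.swap 3 4)) (S 3 4) (S 0 1) (S 2 5)
      (by decide) (by decide) (by decide) (by decide) (by decide) (by decide) sp01
      (CR_span_of_mem 𝒟 h25m n25)
  rw [h25] at hv34
  -- the point (04)
  obtain ⟨v04, n04, hsp04⟩ := CR_exists_spanning 𝒟 (S 0 4)
  have h04m : v04 ∈ 𝒟.P (S 0 4) := by rw [hsp04]; exact mem_span_singleton_self _
  have hm1 : v04 ∈ 𝒟.P (S 1 3) ⊔ 𝒟.P (S 2 5) :=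
    CR_third_le 𝒟 (R (Equiv.swap 0 4 * Equiv.swap 1 3 * Equiv.swap 2 5)) (S 1 3) (S 2 5) (S 0 4)
      (by decide) (by decide) (by decide) (by decide) h04m
  rw [hsp13, sp25, Submodule.mem_sup] at hm1
  obtain ⟨u, hu, w, hw, huw1⟩ := hm1
  rw [mem_span_singleton] at hu hw
  obtain ⟨α, rfl⟩ := hu; obtain ⟨β, rfl⟩ := hw
  have hm2 : v04 ∈ 𝒟.P (S 1 2) ⊔ 𝒟.P (S 3 5) :=
    CR_third_le 𝒟 (R (Equiv.swap 0 4 * Equiv.swap 1 2 * Equiv.swap 3 5)) (S 1 2) (S 3 5) (S 0 4)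
      (by decide) (by decide) (by decide) (by decide) h04m
  rw [hsp12, sp35, Submodule.mem_sup] at hm2
  obtain ⟨u', hu', w', hw', huw2⟩ := hm2
  rw [mem_span_singleton] at hu' hw'
  obtain ⟨γ, rfl⟩ := hu'; obtain ⟨δ, rfl⟩ := hw'
  have hEq : α • v13 + β • (-w14 - w03) = γ • v12 + δ • (-w02 - w14) := huw1.trans huw2.symm
  rw [hv13, hv12] at hEq
  obtain ⟨e0, e1, e2, e3, e4⟩ := indep5 (γ*y2 - α*y1) (γ*y2 - α*y1) (α*x1 + δ) (δ - β)
    (-β - γ*x2) (by linear_combination (norm := module) hEq)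
  have hα : α ≠ 0 := by
    rintro rfl
    have hδ : δ = 0 := by linear_combination e2
    have hβ : β = 0 := by linear_combination e2 - e3
    have hγ : γ = 0 := by
      have hγx : γ * x2 = 0 := by linear_combination -e4 + e3 - e2
      exact (mul_eq_zero.mp hγx).resolve_right hx2
    exact n04 (by rw [← huw2, hγ, hδ, zero_smul, zero_smul, add_zero])
  have hβv : β = -(α*x1) := by linear_combination e2 - e3
  have hγx2 : γ * x2 = α * x1 := by linear_combination -e4 + e3 - e2
  have hkey1 : x1 * y2 = y1 * x2 :=
    mul_left_cancel₀ hα (by linear_combination (-y2) * hγx2 + x2 * e0)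
  rw [hv13, hβv] at huw1
  have hv04u : v04 = α • (x1 • w02 + x1 • w14 + x1 • w03 - y1 • w01 - y1 • w23) := by
    linear_combination (norm := module) -huw1
  rw [hv04u] at hsp04
  rw [Submodule.span_singleton_smul_eq (IsUnit.mk0 α hα)] at hsp04
  -- the point (15)
  obtain ⟨v15, n15, hsp15⟩ := CR_exists_spanning 𝒟 (S 1 5)
  have h15m : v15 ∈ 𝒟.P (S 1 5) := by rw [hsp15]; exact mem_span_singleton_self _
  have hm3 : v15 ∈ 𝒟.P (S 0 4) ⊔ 𝒟.P (S 2 3) :=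
    CR_third_le 𝒟 (R (Equiv.swap 0 4 * Equiv.swap 1 5 * Equiv.swap 2 3)) (S 0 4) (S 2 3) (S 1 5)
      (by decide) (by decide) (by decide) (by decide) h15m
  rw [hsp04, sp23, Submodule.mem_sup] at hm3
  obtain ⟨u, hu, w, hw, huw3⟩ := hm3
  rw [mem_span_singleton] at hu hw
  obtain ⟨α', rfl⟩ := hu; obtain ⟨β', rfl⟩ := hw
  have hm4 : v15 ∈ 𝒟.P (S 0 3) ⊔ 𝒟.P (S 2 4) :=
    CR_third_le 𝒟 (R (Equiv.swap 0 3 * Equiv.swap 1 5 * Equiv.swap 2 4)) (S 0 3) (S 2 4) (S 1 5)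
      (by decide) (by decide) (by decide) (by decide) h15m
  rw [sp03, hsp24, Submodule.mem_sup] at hm4
  obtain ⟨u', hu', w', hw', huw4⟩ := hm4
  rw [mem_span_singleton] at hu' hw'
  obtain ⟨γ', rfl⟩ := hu'; obtain ⟨δ', rfl⟩ := hw'
  have hEq2 : α' • (x1 • w02 + x1 • w14 + x1 • w03 - y1 • w01 - y1 • w23) + β' • w23
      = γ' • w03 + δ' • v24 := huw3.trans huw4.symm
  rw [hv24] at hEq2
  obtain ⟨f0, f1, f2, f3, f4⟩ := indep5 (-(α'*y1) - δ'*x3) (β' - α'*y1) (α'*x1 + δ'*y3)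
    (α'*x1 + δ'*y3) (α'*x1 - γ') (by linear_combination (norm := module) hEq2)
  have hα' : α' ≠ 0 := by
    rintro rfl
    have hδ' : δ' = 0 := by
      have : δ' * y3 = 0 := by linear_combination f2
      exact (mul_eq_zero.mp this).resolve_right hy3
    have hγ' : γ' = 0 := by linear_combination -f4
    exact n15 (by rw [← huw4, hγ', hδ', zero_smul, zero_smul, add_zero])
  have hkey2 : x1 * x3 = y1 * y3 :=
    mul_left_cancel₀ hα' (by linear_combination x3 * f2 + y3 * f0)
  have hβ'v : β' = α' * y1 := by linear_combination f1
  rw [hβ'v] at huw3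
  have hv15u : v15 = α' • (x1 • w02 + x1 • w14 + x1 • w03 - y1 • w01) := by
    linear_combination (norm := module) -huw3
  rw [hv15u] at hsp15
  rw [Submodule.span_singleton_smul_eq (IsUnit.mk0 α' hα')] at hsp15
  -- line (02)(15)(34) : relation forcing x1*x4 = y1*y4
  have h15m2 : x1 • w02 + x1 • w14 + x1 • w03 - y1 • w01 ∈ 𝒟.P (S 1 5) := by
    rw [hsp15]; exact mem_span_singleton_self _
  have hm5 : x1 • w02 + x1 • w14 + x1 • w03 - y1 • w01 ∈ 𝒟.P (S 0 2) ⊔ 𝒟.P (S 3 4) :=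
    CR_third_le 𝒟 (R (Equiv.swap 0 2 * Equiv.swap 1 5 * Equiv.swap 3 4)) (S 0 2) (S 3 4) (S 1 5)
      (by decide) (by decide) (by decide) (by decide) h15m2
  rw [sp02, hsp34, Submodule.mem_sup] at hm5
  obtain ⟨u, hu, w, hw, huw5⟩ := hm5
  rw [mem_span_singleton] at hu hw
  obtain ⟨γ2, rfl⟩ := hu; obtain ⟨δ2, rfl⟩ := hw
  rw [hv34] at huw5
  obtain ⟨g0, _, g2, g3, _⟩ := indep5 (δ2*x4 + y1) 0 (γ2 - x1) (-(δ2*y4) - x1) (-(δ2*y4) - x1)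
    (by linear_combination (norm := module) huw5)
  have hkey3 : x1 * x4 = y1 * y4 := by linear_combination (-x4) * g3 + (-y4) * g0
  -- line (05)(12)(34) : forcing x2 = y2
  have h12m : v12 ∈ 𝒟.P (S 1 2) := by rw [hsp12]; exact mem_span_singleton_self _
  have hm6 : v12 ∈ 𝒟.P (S 0 5) ⊔ 𝒟.P (S 3 4) :=
    CR_third_le 𝒟 (R (Equiv.swap 0 5 * Equiv.swap 1 2 * Equiv.swap 3 4)) (S 0 5) (S 3 4) (S 1 2)
      (by decide) (by decide) (by decide) (by decide) h12m
  rw [sp05, hsp34, Submodule.mem_sup] at hm6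
  obtain ⟨u, hu, w, hw, huw6⟩ := hm6
  rw [mem_span_singleton] at hu hw
  obtain ⟨γ3, rfl⟩ := hu; obtain ⟨δ3, rfl⟩ := hw
  rw [hv34, hv12] at huw6
  obtain ⟨k0, k1, _, k3, k4⟩ := indep5 (δ3*x4 + y2) (y2 - γ3) 0 (-γ3 - δ3*y4) (-(δ3*y4) - x2)
    (by linear_combination (norm := module) huw6)
  have hq : x2 = y2 := by linear_combination -k4 + k3 - k1
  -- final scalar identities
  have hy2' : y2 ≠ 0 := hy2
  have hxy1 : x1 = y1 := by
    have h' : x1 * y2 = y1 * y2 := by rw [hq] at hkey1; exact hkey1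
    exact mul_right_cancel₀ hy2' h'
  have hxy3 : x3 = y3 := by
    rw [← hxy1] at hkey2
    exact mul_left_cancel₀ hx1 hkey2
  have hxy4 : x4 = y4 := by
    rw [← hxy1] at hkey3
    exact mul_left_cancel₀ hx1 hkey3
  have sp13 : 𝒟.P (S 1 3) = span k {w02 - w01 - w23} := by
    have hv : v13 = x1 • (w02 - w01 - w23) := by rw [hv13, ← hxy1]; module
    rw [hsp13, hv, Submodule.span_singleton_smul_eq (IsUnit.mk0 x1 hx1)]
  have sp12 : 𝒟.P (S 1 2) = span k {w03 - w23 - w01} := by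
    have hv : v12 = x2 • (w03 - w23 - w01) := by rw [hv12, ← hq]; module
    rw [hsp12, hv, Submodule.span_singleton_smul_eq (IsUnit.mk0 x2 hx2)]
  have sp24 : 𝒟.P (S 2 4) = span k {w01 - w02 - w14} := by
    have hv : v24 = x3 • (w01 - w02 - w14) := by rw [hv24, ← hxy3]; module
    rw [hsp24, hv, Submodule.span_singleton_smul_eq (IsUnit.mk0 x3 hx3)]
  have sp34 : 𝒟.P (S 3 4) = span k {w01 - w14 - w03} := by
    have hv : v34 = x4 • (w01 - w14 - w03) := by rw [hv34, ← hxy4]; module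
    rw [hsp34, hv, Submodule.span_singleton_smul_eq (IsUnit.mk0 x4 hx4)]
  have sp04 : 𝒟.P (S 0 4) = span k {w02 + w14 + w03 - w01 - w23} := by
    have hv : (x1 • w02 + x1 • w14 + x1 • w03 - y1 • w01 - y1 • w23)
        = x1 • (w02 + w14 + w03 - w01 - w23) := by rw [← hxy1]; module
    rw [hsp04, hv, Submodule.span_singleton_smul_eq (IsUnit.mk0 x1 hx1)]
  have sp15 : 𝒟.P (S 1 5) = span k {w02 + w14 + w03 - w01} := by
    have hv : (x1 • w02 + x1 • w14 + x1 • w03 - y1 • w01)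
        = x1 • (w02 + w14 + w03 - w01) := by rw [← hxy1]; module
    rw [hsp15, hv, Submodule.span_singleton_smul_eq (IsUnit.mk0 x1 hx1)]
  refine ⟨![w01, w23, w02, w14, w03], ?_, ?_⟩
  · refine Fintype.linearIndependent_iff.mpr (fun g hg => ?_)
    rw [Fin.sum_univ_five] at hg
    obtain ⟨h0, h1, h2, h3, h4⟩ := indep5 (g 0) (g 1) (g 2) (g 3) (g 4) hg
    intro i; fin_cases i <;> assumption
  · intro σ
    have hm := swap_enum σ.1 σ.2
    simp only [List.mem_cons, List.not_mem_nil, or_false] at hm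
    rcases hm with h|h|h|h|h|h|h|h|h|h|h|h|h|h|h
    · rw [show σ = S 0 1 from Subtype.ext h, S_val, crVec_01]; exact sp01
    · rw [show σ = S 0 2 from Subtype.ext h, S_val, crVec_02]; exact sp02
    · rw [show σ = S 0 3 from Subtype.ext h, S_val, crVec_03]; exact sp03
    · rw [show σ = S 0 4 from Subtype.ext h, S_val, crVec_04]; exact sp04
    · rw [show σ = S 0 5 from Subtype.ext h, S_val, crVec_05]; exact sp05
    · rw [show σ = S 1 2 from Subtype.ext h, S_val, crVec_12]; exact sp12
    · rw [show σ = S 1 3 from Subtype.ext h, S_val, crVec_13]; exact sp13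
    · rw [show σ = S 1 4 from Subtype.ext h, S_val, crVec_14]; exact sp14
    · rw [show σ = S 1 5 from Subtype.ext h, S_val, crVec_15]; exact sp15
    · rw [show σ = S 2 3 from Subtype.ext h, S_val, crVec_23]; exact sp23
    · rw [show σ = S 2 4 from Subtype.ext h, S_val, crVec_24]; exact sp24
    · rw [show σ = S 2 5 from Subtype.ext h, S_val, crVec_25]; exact sp25
    · rw [show σ = S 3 4 from Subtype.ext h, S_val, crVec_34]; exact sp34
    · rw [show σ = S 3 5 from Subtype.ext h, S_val, crVec_35]; exact sp35
    · rw [show σ = S 4 5 from Subtype.ext h, S_val, crVec_45]; exact sp45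

theorem cremonaRichmond_unique_aux (k V : Type*) [Field k]
    [AddCommGroup V] [Module k V] (h5 : Module.finrank k V = 5)
    (𝒞 𝒞' : CremonaRichmondConfig k V) :
    ∃ g : V ≃ₗ[k] V,
      Set.range (fun ρ => (𝒞.L ρ).map (g : V →ₗ[k] V)) = Set.range 𝒞'.L ∧
      Set.range (fun σ => (𝒞.P σ).map (g : V →ₗ[k] V)) = Set.range 𝒞'.P := by
  haveI : FiniteDimensional k V := Module.finite_of_finrank_pos (by rw [h5]; omega)
  obtain ⟨b, hb, hP⟩ := crCoord 𝒞 h5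
  obtain ⟨b', hb', hP'⟩ := crCoord 𝒞' h5
  let B := basisOfLinearIndependentOfCardEqFinrank hb (by simp [h5])
  let B' := basisOfLinearIndependentOfCardEqFinrank hb' (by simp [h5])
  let g : V ≃ₗ[k] V := B.equiv B' (Equiv.refl _)
  have hgb : ∀ i, (g : V →ₗ[k] V) (b i) = b' i := by
    intro i
    have h1 : B i = b i := by simp [B, coe_basisOfLinearIndependentOfCardEqFinrank]
    have h2 : B' i = b' i := by simp [B', coe_basisOfLinearIndependentOfCardEqFinrank]
    show g (b i) = b' i
    rw [← h1, ← h2]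
    simp [g, Module.Basis.equiv_apply]
  have hgP : ∀ σ, (𝒞.P σ).map (g : V →ₗ[k] V) = 𝒞'.P σ := by
    intro σ
    rw [hP σ, hP' σ, Submodule.map_span, Set.image_singleton]
    refine congrArg (fun x => Submodule.span k {x}) ?_
    have hm := swap_enum σ.1 σ.2
    simp only [List.mem_cons, List.not_mem_nil, or_false] at hm
    rcases hm with h|h|h|h|h|h|h|h|h|h|h|h|h|h|h <;>
      rw [h] <;>
      simp only [crVec_01, crVec_02, crVec_03, crVec_04, crVec_05, crVec_12, crVec_13,
        crVec_14, crVec_15, crVec_23, crVec_24, crVec_25, crVec_34, crVec_35, crVec_45] <;>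
      simp only [map_add, map_sub, map_neg, hgb]
  have hgL : ∀ ρ, (𝒞.L ρ).map (g : V →ₗ[k] V) = 𝒞'.L ρ := by
    intro ρ
    have hm := fpf_enum ρ.1 ρ.2
    simp only [List.mem_cons, List.not_mem_nil, or_false] at hm
    rcases hm with h|h|h|h|h|h|h|h|h|h|h|h|h|h|h
    · rw [show ρ = R (Equiv.swap 0 1 * Equiv.swap 2 3 * Equiv.swap 4 5) from Subtype.ext h,
        CR_line_eq_sup 𝒞 (R (Equiv.swap 0 1 * Equiv.swap 2 3 * Equiv.swap 4 5)) (S 0 1) (S 2 3)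
          (by decide) (by decide) (by decide),
        CR_line_eq_sup 𝒞' (R (Equiv.swap 0 1 * Equiv.swap 2 3 * Equiv.swap 4 5)) (S 0 1) (S 2 3)
          (by decide) (by decide) (by decide),
        Submodule.map_sup, hgP, hgP]
    · rw [show ρ = R (Equiv.swap 0 1 * Equiv.swap 2 4 * Equiv.swap 3 5) from Subtype.ext h,
        CR_line_eq_sup 𝒞 (R (Equiv.swap 0 1 * Equiv.swap 2 4 * Equiv.swap 3 5)) (S 0 1) (S 2 4)
          (by decide) (by decide) (by decide),
        CR_line_eq_sup 𝒞' (R (Equiv.swap 0 1 * Equiv.swap 2 4 * Equiv.swap 3 5)) (S 0 1) (S 2 4)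
          (by decide) (by decide) (by decide),
        Submodule.map_sup, hgP, hgP]
    · rw [show ρ = R (Equiv.swap 0 1 * Equiv.swap 2 5 * Equiv.swap 3 4) from Subtype.ext h,
        CR_line_eq_sup 𝒞 (R (Equiv.swap 0 1 * Equiv.swap 2 5 * Equiv.swap 3 4)) (S 0 1) (S 2 5)
          (by decide) (by decide) (by decide),
        CR_line_eq_sup 𝒞' (R (Equiv.swap 0 1 * Equiv.swap 2 5 * Equiv.swap 3 4)) (S 0 1) (S 2 5)
          (by decide) (by decide) (by decide),
        Submodule.map_sup, hgP, hgP]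
    · rw [show ρ = R (Equiv.swap 0 2 * Equiv.swap 1 3 * Equiv.swap 4 5) from Subtype.ext h,
        CR_line_eq_sup 𝒞 (R (Equiv.swap 0 2 * Equiv.swap 1 3 * Equiv.swap 4 5)) (S 0 2) (S 1 3)
          (by decide) (by decide) (by decide),
        CR_line_eq_sup 𝒞' (R (Equiv.swap 0 2 * Equiv.swap 1 3 * Equiv.swap 4 5)) (S 0 2) (S 1 3)
          (by decide) (by decide) (by decide),
        Submodule.map_sup, hgP, hgP]
    · rw [show ρ = R (Equiv.swap 0 2 * Equiv.swap 1 4 * Equiv.swap 3 5) from Subtype.ext h,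
        CR_line_eq_sup 𝒞 (R (Equiv.swap 0 2 * Equiv.swap 1 4 * Equiv.swap 3 5)) (S 0 2) (S 1 4)
          (by decide) (by decide) (by decide),
        CR_line_eq_sup 𝒞' (R (Equiv.swap 0 2 * Equiv.swap 1 4 * Equiv.swap 3 5)) (S 0 2) (S 1 4)
          (by decide) (by decide) (by decide),
        Submodule.map_sup, hgP, hgP]
    · rw [show ρ = R (Equiv.swap 0 2 * Equiv.swap 1 5 * Equiv.swap 3 4) from Subtype.ext h,
        CR_line_eq_sup 𝒞 (R (Equiv.swap 0 2 * Equiv.swap 1 5 * Equiv.swap 3 4)) (S 0 2) (S 1 5)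
          (by decide) (by decide) (by decide),
        CR_line_eq_sup 𝒞' (R (Equiv.swap 0 2 * Equiv.swap 1 5 * Equiv.swap 3 4)) (S 0 2) (S 1 5)
          (by decide) (by decide) (by decide),
        Submodule.map_sup, hgP, hgP]
    · rw [show ρ = R (Equiv.swap 0 3 * Equiv.swap 1 2 * Equiv.swap 4 5) from Subtype.ext h,
        CR_line_eq_sup 𝒞 (R (Equiv.swap 0 3 * Equiv.swap 1 2 * Equiv.swap 4 5)) (S 0 3) (S 1 2)
          (by decide) (by decide) (by decide),
        CR_line_eq_sup 𝒞' (R (Equiv.swap 0 3 * Equiv.swap 1 2 * Equiv.swap 4 5)) (S 0 3) (S 1 2)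
          (by decide) (by decide) (by decide),
        Submodule.map_sup, hgP, hgP]
    · rw [show ρ = R (Equiv.swap 0 3 * Equiv.swap 1 4 * Equiv.swap 2 5) from Subtype.ext h,
        CR_line_eq_sup 𝒞 (R (Equiv.swap 0 3 * Equiv.swap 1 4 * Equiv.swap 2 5)) (S 0 3) (S 1 4)
          (by decide) (by decide) (by decide),
        CR_line_eq_sup 𝒞' (R (Equiv.swap 0 3 * Equiv.swap 1 4 * Equiv.swap 2 5)) (S 0 3) (S 1 4)
          (by decide) (by decide) (by decide),
        Submodule.map_sup, hgP, hgP]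
    · rw [show ρ = R (Equiv.swap 0 3 * Equiv.swap 1 5 * Equiv.swap 2 4) from Subtype.ext h,
        CR_line_eq_sup 𝒞 (R (Equiv.swap 0 3 * Equiv.swap 1 5 * Equiv.swap 2 4)) (S 0 3) (S 1 5)
          (by decide) (by decide) (by decide),
        CR_line_eq_sup 𝒞' (R (Equiv.swap 0 3 * Equiv.swap 1 5 * Equiv.swap 2 4)) (S 0 3) (S 1 5)
          (by decide) (by decide) (by decide),
        Submodule.map_sup, hgP, hgP]
    · rw [show ρ = R (Equiv.swap 0 4 * Equiv.swap 1 2 * Equiv.swap 3 5) from Subtype.ext h,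
        CR_line_eq_sup 𝒞 (R (Equiv.swap 0 4 * Equiv.swap 1 2 * Equiv.swap 3 5)) (S 0 4) (S 1 2)
          (by decide) (by decide) (by decide),
        CR_line_eq_sup 𝒞' (R (Equiv.swap 0 4 * Equiv.swap 1 2 * Equiv.swap 3 5)) (S 0 4) (S 1 2)
          (by decide) (by decide) (by decide),
        Submodule.map_sup, hgP, hgP]
    · rw [show ρ = R (Equiv.swap 0 4 * Equiv.swap 1 3 * Equiv.swap 2 5) from Subtype.ext h,
        CR_line_eq_sup 𝒞 (R (Equiv.swap 0 4 * Equiv.swap 1 3 * Equiv.swap 2 5)) (S 0 4) (S 1 3)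
          (by decide) (by decide) (by decide),
        CR_line_eq_sup 𝒞' (R (Equiv.swap 0 4 * Equiv.swap 1 3 * Equiv.swap 2 5)) (S 0 4) (S 1 3)
          (by decide) (by decide) (by decide),
        Submodule.map_sup, hgP, hgP]
    · rw [show ρ = R (Equiv.swap 0 4 * Equiv.swap 1 5 * Equiv.swap 2 3) from Subtype.ext h,
        CR_line_eq_sup 𝒞 (R (Equiv.swap 0 4 * Equiv.swap 1 5 * Equiv.swap 2 3)) (S 0 4) (S 1 5)
          (by decide) (by decide) (by decide),
        CR_line_eq_sup 𝒞' (R (Equiv.swap 0 4 * Equiv.swap 1 5 * Equiv.swap 2 3)) (S 0 4) (S 1 5)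
          (by decide) (by decide) (by decide),
        Submodule.map_sup, hgP, hgP]
    · rw [show ρ = R (Equiv.swap 0 5 * Equiv.swap 1 2 * Equiv.swap 3 4) from Subtype.ext h,
        CR_line_eq_sup 𝒞 (R (Equiv.swap 0 5 * Equiv.swap 1 2 * Equiv.swap 3 4)) (S 0 5) (S 1 2)
          (by decide) (by decide) (by decide),
        CR_line_eq_sup 𝒞' (R (Equiv.swap 0 5 * Equiv.swap 1 2 * Equiv.swap 3 4)) (S 0 5) (S 1 2)
          (by decide) (by decide) (by decide),
        Submodule.map_sup, hgP, hgP]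
    · rw [show ρ = R (Equiv.swap 0 5 * Equiv.swap 1 3 * Equiv.swap 2 4) from Subtype.ext h,
        CR_line_eq_sup 𝒞 (R (Equiv.swap 0 5 * Equiv.swap 1 3 * Equiv.swap 2 4)) (S 0 5) (S 1 3)
          (by decide) (by decide) (by decide),
        CR_line_eq_sup 𝒞' (R (Equiv.swap 0 5 * Equiv.swap 1 3 * Equiv.swap 2 4)) (S 0 5) (S 1 3)
          (by decide) (by decide) (by decide),
        Submodule.map_sup, hgP, hgP]
    · rw [show ρ = R (Equiv.swap 0 5 * Equiv.swap 1 4 * Equiv.swap 2 3) from Subtype.ext h,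
        CR_line_eq_sup 𝒞 (R (Equiv.swap 0 5 * Equiv.swap 1 4 * Equiv.swap 2 3)) (S 0 5) (S 1 4)
          (by decide) (by decide) (by decide),
        CR_line_eq_sup 𝒞' (R (Equiv.swap 0 5 * Equiv.swap 1 4 * Equiv.swap 2 3)) (S 0 5) (S 1 4)
          (by decide) (by decide) (by decide),
        Submodule.map_sup, hgP, hgP]
  exact ⟨g, congrArg Set.range (funext hgL), congrArg Set.range (funext hgP)⟩

/-- Theorem A.4: any two Cremona–Richmond configurations in a 5-dimensional vector space
over an algebraically closed field of characteristic zero are projectively equivalent. -/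
theorem cremonaRichmond_unique (k V : Type*) [Field k] [IsAlgClosed k] [CharZero k]
    [AddCommGroup V] [Module k V] (h5 : Module.finrank k V = 5)
    (𝒞 𝒞' : CremonaRichmondConfig k V) :
    ∃ g : V ≃ₗ[k] V,
      Set.range (fun ρ => (𝒞.L ρ).map (g : V →ₗ[k] V)) = Set.range 𝒞'.L ∧
      Set.range (fun σ => (𝒞.P σ).map (g : V →ₗ[k] V)) = Set.range 𝒞'.P :=
  cremonaRichmond_unique_aux k V h5 𝒞 𝒞'
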